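/- Let $X$ be a real Hilbert space and $J : X \to \mathbb{R}$ be $C^1$, sequentially weakly upper semicontinuous, with $J'$ Lipschitz of constant $L$ and $J'(u) \ne 0$ for all $u \in X$. Let $M$ be the set of global minima of $u \mapsto \tfrac{1}{2}\|u\|^2 - \tfrac{1}{L} J(u)$ and set $\delta_0 = \inf_{u \in M}\|u\|^2$. Then $\delta_0 > 0$, and for every $r \in (0, \delta_0)$, the restriction of $J$ to the sphere $\{u : \|u\|^2 = r\}$ attains its supremum at exactly one point. -/

import Mathlib

open scoped NNReal ENNReal RealInnerProductSpace
open Filter InnerProductSpace Topology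

section Aux

variable {X : Type*} [NormedAddCommGroup X] [InnerProductSpace ℝ X] [CompleteSpace X]

/-- Bounded sequences in a Hilbert space have weakly convergent subsequences. -/
theorem aux_weak_compact (C : ℝ) (u : ℕ → X) (hu : ∀ n, ‖u n‖ ≤ C) :
    ∃ (z : X) (φ : ℕ → ℕ), StrictMono φ ∧
      ∀ x : X, Tendsto (fun k => ⟪u (φ k), x⟫_ℝ) atTop (𝓝 ⟪z, x⟫_ℝ) := by
  have hC : 0 ≤ C := le_trans (norm_nonneg _) (hu 0)
  -- diagonal extraction via compactness of a product of intervals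
  set A : ℕ → (ℕ → ℝ) := fun n m => ⟪u n, u m⟫_ℝ with hA
  have hcomp : IsCompact (Set.pi Set.univ fun _ : ℕ => Set.Icc (-(C^2)) (C^2)) :=
    isCompact_univ_pi fun _ => isCompact_Icc
  have hmem : ∀ n, A n ∈ Set.pi Set.univ fun _ : ℕ => Set.Icc (-(C^2)) (C^2) := by
    intro n m _
    have h1 : |⟪u n, u m⟫_ℝ| ≤ ‖u n‖ * ‖u m‖ := abs_real_inner_le_norm _ _
    have h2 : ‖u n‖ * ‖u m‖ ≤ C^2 := by
      have := mul_le_mul (hu n) (hu m) (norm_nonneg _) hC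
      nlinarith
    constructor
    · nlinarith [abs_nonneg (⟪u n, u m⟫_ℝ), neg_abs_le (⟪u n, u m⟫_ℝ)]
    · nlinarith [le_abs_self (⟪u n, u m⟫_ℝ)]
  obtain ⟨l, -, φ, hφ, hconv⟩ := hcomp.isSeqCompact hmem
  have hconv' : ∀ m, Tendsto (fun k => ⟪u (φ k), u m⟫_ℝ) atTop (𝓝 (l m)) := by
    intro m
    exact (tendsto_pi_nhds.mp hconv) m
  -- the set of points where the subsequence of functionals converges
  set T : Set X := {x | ∃ c : ℝ, Tendsto (fun k => ⟪u (φ k), x⟫_ℝ) atTop (𝓝 c)} with hT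
  have hTclosed : closure T ⊆ T := by
    intro x hx
    have hcauchy : CauchySeq (fun k => ⟪u (φ k), x⟫_ℝ) := by
      rw [Metric.cauchySeq_iff]
      intro ε hε
      have hpos : 0 < ε / (3 * (C + 1)) := by positivity
      obtain ⟨x', hx'T, hx'd⟩ := Metric.mem_closure_iff.mp hx _ hpos
      obtain ⟨c, hc⟩ := hx'T
      have hcs : CauchySeq (fun k => ⟪u (φ k), x'⟫_ℝ) := hc.cauchySeq
      rw [Metric.cauchySeq_iff] at hcs
      obtain ⟨N, hN⟩ := hcs (ε / 3) (by linarith)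
      refine ⟨N, fun m hm n hn => ?_⟩
      have hb : ∀ j, |⟪u (φ j), x⟫_ℝ - ⟪u (φ j), x'⟫_ℝ| ≤ C * dist x x' := by
        intro j
        rw [← inner_sub_right]
        calc |⟪u (φ j), x - x'⟫_ℝ| ≤ ‖u (φ j)‖ * ‖x - x'‖ := abs_real_inner_le_norm _ _
          _ ≤ C * ‖x - x'‖ := by
              exact mul_le_mul_of_nonneg_right (hu _) (norm_nonneg _)
          _ = C * dist x x' := by rw [dist_eq_norm]
      have hCd : C * dist x x' ≤ ε / 3 := by
        have h1 : C * dist x x' ≤ C * (ε / (3 * (C + 1))) :=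
          mul_le_mul_of_nonneg_left hx'd.le hC
        have h2 : C * (ε / (3 * (C + 1))) ≤ ε / 3 := by
          have hne : (3:ℝ) * (C + 1) ≠ 0 := by positivity
          have hkey : (3 * (C + 1)) * (ε / (3 * (C + 1))) = ε := mul_div_cancel₀ _ hne
          nlinarith [hpos.le]
        linarith
      have := hN m hm n hn
      rw [Real.dist_eq] at this ⊢
      have h1 := hb m; have h2 := hb n
      have := abs_sub_abs_le_abs_sub (⟪u (φ m), x⟫_ℝ) (⟪u (φ n), x⟫_ℝ)
      calc |⟪u (φ m), x⟫_ℝ - ⟪u (φ n), x⟫_ℝ|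
          ≤ |⟪u (φ m), x⟫_ℝ - ⟪u (φ m), x'⟫_ℝ| + |⟪u (φ m), x'⟫_ℝ - ⟪u (φ n), x⟫_ℝ| :=
            abs_sub_le _ _ _
        _ ≤ |⟪u (φ m), x⟫_ℝ - ⟪u (φ m), x'⟫_ℝ| + (|⟪u (φ m), x'⟫_ℝ - ⟪u (φ n), x'⟫_ℝ|
              + |⟪u (φ n), x'⟫_ℝ - ⟪u (φ n), x⟫_ℝ|) := by
            gcongr; exact abs_sub_le _ _ _
        _ < ε := by
            have h3 : |⟪u (φ n), x'⟫_ℝ - ⟪u (φ n), x⟫_ℝ| ≤ C * dist x x' := by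
              rw [abs_sub_comm]; exact hb n
            linarith
    obtain ⟨c, hc⟩ := cauchySeq_tendsto_of_complete hcauchy
    exact ⟨c, hc⟩
  -- span of the range is contained in T
  have hspan : (Submodule.span ℝ (Set.range u) : Set X) ⊆ T := by
    intro x hx
    induction hx using Submodule.span_induction with
    | mem x hx =>
        obtain ⟨m, rfl⟩ := hx
        exact ⟨l m, hconv' m⟩
    | zero => exact ⟨0, by simpa using tendsto_const_nhds⟩
    | add x y _ _ hx hy =>
        obtain ⟨cx, hcx⟩ := hx; obtain ⟨cy, hcy⟩ := hy
        exact ⟨cx + cy, by simpa [inner_add_right] using hcx.add hcy⟩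
    | smul a x _ hx =>
        obtain ⟨cx, hcx⟩ := hx
        exact ⟨a * cx, by simpa [inner_smul_right] using hcx.const_mul a⟩
  -- all of X is in T, via orthogonal projection
  set K : Submodule ℝ X := (Submodule.span ℝ (Set.range u)).topologicalClosure with hK
  haveI : CompleteSpace K := (Submodule.isClosed_topologicalClosure _).completeSpace_coe
  have huK : ∀ n, u n ∈ K := fun n =>
    (Submodule.le_topologicalClosure _) (Submodule.subset_span ⟨n, rfl⟩)
  have hall : ∀ x : X, ∃ c : ℝ, Tendsto (fun k => ⟪u (φ k), x⟫_ℝ) atTop (𝓝 c) := by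
    intro x
    have hPmem : ((K.orthogonalProjectionOnto x : K) : X) ∈ T := by
      apply hTclosed
      have hmem2 : ((K.orthogonalProjectionOnto x : K) : X) ∈ (K : Set X) := Subtype.coe_prop _
      have h2 : (K : Set X)
          = closure ((Submodule.span ℝ (Set.range u) : Submodule ℝ X) : Set X) :=
        Submodule.topologicalClosure_coe _
      rw [h2] at hmem2
      exact closure_mono hspan hmem2
    obtain ⟨c, hc⟩ := hPmem
    refine ⟨c, ?_⟩
    have heq : ∀ k, ⟪u (φ k), x⟫_ℝ = ⟪u (φ k), ((K.orthogonalProjectionOnto x : K) : X)⟫_ℝ := by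
      intro k
      have horth : x - ((K.orthogonalProjectionOnto x : K) : X) ∈ Kᗮ :=
        Submodule.sub_starProjection_mem_orthogonal (K := K) x
      have h0 : ⟪u (φ k), x - ((K.orthogonalProjectionOnto x : K) : X)⟫_ℝ = 0 :=
        (Submodule.mem_orthogonal K _).mp horth _ (huK _)
      rw [inner_sub_right] at h0
      linarith
    simpa only [heq] using hc
  choose f hf using hall
  -- f is a bounded linear functional
  have hbound : ∀ x, |f x| ≤ C * ‖x‖ := by
    intro x
    have : Tendsto (fun k => |⟪u (φ k), x⟫_ℝ|) atTop (𝓝 |f x|) := (hf x).abs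
    refine le_of_tendsto this (Eventually.of_forall fun k => ?_)
    calc |⟪u (φ k), x⟫_ℝ| ≤ ‖u (φ k)‖ * ‖x‖ := abs_real_inner_le_norm _ _
      _ ≤ C * ‖x‖ := mul_le_mul_of_nonneg_right (hu _) (norm_nonneg _)
  have hadd : ∀ x y, f (x + y) = f x + f y := by
    intro x y
    refine tendsto_nhds_unique (hf (x + y)) ?_
    simpa [inner_add_right] using (hf x).add (hf y)
  have hsmul : ∀ (a : ℝ) (x : X), f (a • x) = a * f x := by
    intro a x
    refine tendsto_nhds_unique (hf (a • x)) ?_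
    simpa [inner_smul_right] using (hf x).const_mul a
  set F : X →L[ℝ] ℝ := LinearMap.mkContinuous
    { toFun := f, map_add' := hadd, map_smul' := hsmul } C
    (fun x => by simpa [Real.norm_eq_abs] using hbound x) with hF
  refine ⟨(toDual ℝ X).symm F, φ, hφ, fun x => ?_⟩
  have : ⟪(toDual ℝ X).symm F, x⟫_ℝ = F x := toDual_symm_apply
  rw [this]
  exact hf x

end Aux

section Aux2

variable {X : Type*} [NormedAddCommGroup X] [InnerProductSpace ℝ X] [CompleteSpace X]

theorem aux_grad (J : X → ℝ) (J' : X → X) (hgrad : ∀ x, HasGradientAt J (J' x) x)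
    (ℓ : ℝ) (x : X) :
    HasFDerivAt (fun y => ℓ / 2 * ‖y‖ ^ 2 - J y) (toDual ℝ X (ℓ • x - J' x)) x := by
  have h1 : HasFDerivAt (fun y : X => ⟪y, y⟫_ℝ)
      ((fderivInnerCLM ℝ (x, x)).comp
        ((ContinuousLinearMap.id ℝ X).prod (ContinuousLinearMap.id ℝ X))) x :=
    (hasFDerivAt_id x).inner ℝ (hasFDerivAt_id x)
  have h1' := h1.const_mul (ℓ / 2)
  have h2 := h1'.sub (hgrad x).hasFDerivAt
  have heq : (fun y : X => ℓ / 2 * ⟪y, y⟫_ℝ - J y) = fun y => ℓ / 2 * ‖y‖ ^ 2 - J y := by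
    funext y; rw [real_inner_self_eq_norm_sq]
  rw [show ((fun y : X => ℓ / 2 * ⟪y, y⟫_ℝ) - J) = fun y => ℓ / 2 * ‖y‖ ^ 2 - J y from heq] at h2
  refine h2.congr_fderiv ?_
  ext v
  simp only [toDual_apply_apply, ContinuousLinearMap.sub_apply, ContinuousLinearMap.smul_apply,
    ContinuousLinearMap.comp_apply, ContinuousLinearMap.prod_apply, ContinuousLinearMap.id_apply,
    fderivInnerCLM_apply, inner_sub_left, real_inner_smul_left, smul_eq_mul]
  rw [real_inner_comm v x]
  ring

theorem aux_descent (J : X → ℝ) (J' : X → X) (hgrad : ∀ x, HasGradientAt J (J' x) x)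
    (L : ℝ≥0) (hLip : LipschitzWith L J') (x v : X) :
    J (x + v) ≤ J x + ⟪J' x, v⟫_ℝ + (L : ℝ) / 2 * ‖v‖ ^ 2 := by
  set c : ℝ := ⟪J' x, v⟫_ℝ with hc
  set b : ℝ := (L : ℝ) * ‖v‖ ^ 2 / 2 with hb
  set φ : ℝ → ℝ := fun t => J (x + t • v) - t * c - b * t ^ 2 with hφ
  have hder : ∀ t : ℝ, HasDerivAt φ (⟪J' (x + t • v), v⟫_ℝ - c - b * (2 * t)) t := by
    intro t
    have hcv : HasDerivAt (fun t : ℝ => x + t • v) v t := by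
      simpa using ((hasDerivAt_id t).smul_const v).const_add x
    have hJ : HasDerivAt (fun t : ℝ => J (x + t • v)) (toDual ℝ X (J' (x + t • v)) v) t :=
      (hgrad (x + t • v)).hasFDerivAt.comp_hasDerivAt t hcv
    rw [toDual_apply_apply] at hJ
    have h2 : HasDerivAt (fun t : ℝ => t * c) c t := by
      simpa using (hasDerivAt_id t).mul_const c
    have h3 : HasDerivAt (fun t : ℝ => b * t ^ 2) (b * (2 * t)) t := by
      simpa using (hasDerivAt_pow 2 t).const_mul b
    exact (hJ.sub h2).sub h3
  have hmono : AntitoneOn φ (Set.Icc (0 : ℝ) 1) := by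
    apply antitoneOn_of_deriv_nonpos (convex_Icc 0 1)
    · exact Continuous.continuousOn (by
        apply continuous_iff_continuousAt.mpr
        intro t
        exact (hder t).continuousAt)
    · intro t _
      exact (hder t).differentiableAt.differentiableWithinAt
    · intro t ht
      rw [interior_Icc] at ht
      rw [(hder t).deriv]
      have hlip : ‖J' (x + t • v) - J' x‖ ≤ (L : ℝ) * (t * ‖v‖) := by
        have := hLip.dist_le_mul (x + t • v) x
        rw [dist_eq_norm, dist_eq_norm] at this
        have h4 : x + t • v - x = t • v := by abel
        rw [h4, norm_smul] at this
        simpa [abs_of_pos ht.1] using this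
      have hip : ⟪J' (x + t • v) - J' x, v⟫_ℝ ≤ (L : ℝ) * (t * ‖v‖) * ‖v‖ :=
        le_trans (real_inner_le_norm _ _) (mul_le_mul_of_nonneg_right hlip (norm_nonneg _))
      rw [inner_sub_left] at hip
      have : b * (2 * t) = (L : ℝ) * t * ‖v‖ ^ 2 := by rw [hb]; ring
      nlinarith [hip]
  have h01 := hmono (Set.mem_Icc.mpr ⟨le_refl 0, zero_le_one⟩)
    (Set.mem_Icc.mpr ⟨zero_le_one, le_refl 1⟩) zero_le_one
  have hφ0 : φ 0 = J x := by simp [hφ]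
  have hφ1 : φ 1 = J (x + v) - c - b := by simp [hφ]
  rw [hφ0, hφ1] at h01
  rw [hb] at h01
  linarith

theorem aux_descent' (J : X → ℝ) (J' : X → X) (hgrad : ∀ x, HasGradientAt J (J' x) x)
    (L : ℝ≥0) (hLip : LipschitzWith L J') (a bb : X) :
    J bb ≤ J a + ⟪J' a, bb - a⟫_ℝ + (L : ℝ) / 2 * ‖bb - a‖ ^ 2 := by
  have := aux_descent J J' hgrad L hLip a (bb - a)
  simpa using this

/-- A critical point `J' y = ℓ • y` is a global minimum of `g`. -/
theorem aux_global (J : X → ℝ) (J' : X → X) (hgrad : ∀ x, HasGradientAt J (J' x) x)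
    (L : ℝ≥0) (hLip : LipschitzWith L J') (y : X) (hy : J' y = (L : ℝ) • y) (x : X) :
    (L : ℝ) / 2 * ‖y‖ ^ 2 - J y ≤ (L : ℝ) / 2 * ‖x‖ ^ 2 - J x := by
  have hd := aux_descent' J J' hgrad L hLip y x
  rw [hy, real_inner_smul_left, inner_sub_right] at hd
  have hns : ‖x - y‖ ^ 2 = ‖x‖ ^ 2 - 2 * ⟪x, y⟫_ℝ + ‖y‖ ^ 2 := norm_sub_sq_real x y
  have h1 : ⟪y, y⟫_ℝ = ‖y‖ ^ 2 := real_inner_self_eq_norm_sq y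
  have h2 : ⟪y, x⟫_ℝ = ⟪x, y⟫_ℝ := real_inner_comm x y
  rw [hns, h1, h2] at hd
  ring_nf at hd ⊢
  linarith [hd]

/-- Midpoint convexity of `g`. -/
theorem aux_midpoint (J : X → ℝ) (J' : X → X) (hgrad : ∀ x, HasGradientAt J (J' x) x)
    (L : ℝ≥0) (hLip : LipschitzWith L J') (x y : X) :
    (L : ℝ) / 2 * ‖(1 / 2 : ℝ) • (x + y)‖ ^ 2 - J ((1 / 2 : ℝ) • (x + y)) ≤
      (((L : ℝ) / 2 * ‖x‖ ^ 2 - J x) + ((L : ℝ) / 2 * ‖y‖ ^ 2 - J y)) / 2 := by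
  set m : X := (1 / 2 : ℝ) • (x + y) with hm
  have hxm : x - m = (1 / 2 : ℝ) • (x - y) := by
    rw [hm]; rw [smul_add, smul_sub]; module
  have hym : y - m = -((1 / 2 : ℝ) • (x - y)) := by
    rw [hm]; rw [smul_add, smul_sub]; module
  have hd1 := aux_descent' J J' hgrad L hLip m x
  have hd2 := aux_descent' J J' hgrad L hLip m y
  rw [hxm] at hd1
  rw [hym] at hd2
  have hni : ‖(1 / 2 : ℝ) • (x - y)‖ ^ 2 = (1 / 4) * ‖x - y‖ ^ 2 := by
    rw [norm_smul]; simp; ring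
  have hnegn : ‖-((1 / 2 : ℝ) • (x - y))‖ ^ 2 = (1 / 4) * ‖x - y‖ ^ 2 := by
    rw [norm_neg]; exact hni
  rw [hni] at hd1
  rw [hnegn, inner_neg_right] at hd2
  -- parallelogram-type identity
  have hpar : ‖x‖ ^ 2 + ‖y‖ ^ 2 = 2 * ‖m‖ ^ 2 + ‖x - y‖ ^ 2 / 2 := by
    have := parallelogram_law_with_norm ℝ x y
    have hmn : ‖x + y‖ ^ 2 = 4 * ‖m‖ ^ 2 := by
      rw [hm, norm_smul]
      simp
      ring
    nlinarith [this]
  have hparL : (L : ℝ) / 2 * (‖x‖ ^ 2 + ‖y‖ ^ 2)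
      = (L : ℝ) / 2 * (2 * ‖m‖ ^ 2 + ‖x - y‖ ^ 2 / 2) := by rw [hpar]
  ring_nf at hd1 hd2 hparL ⊢
  linarith [hd1, hd2, hparL]

end Aux2

section Aux3

variable {X : Type*} [NormedAddCommGroup X] [InnerProductSpace ℝ X] [CompleteSpace X]

theorem aux_ball_min (J : X → ℝ) (J' : X → X) (hgrad : ∀ x, HasGradientAt J (J' x) x)
    (hsw : ∀ (u : ℕ → X) (y : X),
      Tendsto (fun n => toWeakSpace ℝ X (u n)) atTop (nhds (toWeakSpace ℝ X y)) →
        limsup (fun n => J (u n)) atTop ≤ J y)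
    (L : ℝ≥0) (hLip : LipschitzWith L J') (ρ : ℝ) (hρ : 0 ≤ ρ) :
    ∃ y : X, ‖y‖ ≤ ρ ∧ ∀ x : X, ‖x‖ ≤ ρ →
      (L : ℝ) / 2 * ‖y‖ ^ 2 - J y ≤ (L : ℝ) / 2 * ‖x‖ ^ 2 - J x := by
  classical
  set g : X → ℝ := fun x => (L : ℝ) / 2 * ‖x‖ ^ 2 - J x with hg
  set B : Set X := {x : X | ‖x‖ ≤ ρ} with hB
  have h0B : (0 : X) ∈ B := by simp [hB, hρ]
  have hBne : (g '' B).Nonempty := ⟨g 0, 0, h0B, rfl⟩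
  have hgb : ∀ x ∈ B, g 0 - ‖J' 0‖ * ρ ≤ g x := by
    intro x hx
    have hd := aux_descent J J' hgrad L hLip 0 x
    rw [zero_add] at hd
    have hip : ⟪J' 0, x⟫_ℝ ≤ ‖J' 0‖ * ρ := by
      refine le_trans (real_inner_le_norm _ _) ?_
      exact mul_le_mul_of_nonneg_left hx (norm_nonneg _)
    simp only [hg, norm_zero]
    have : (0:ℝ)^2 = 0 := by norm_num
    nlinarith [hd, hip]
  have hbdd : BddBelow (g '' B) := by
    refine ⟨g 0 - ‖J' 0‖ * ρ, ?_⟩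
    rintro _ ⟨x, hx, rfl⟩
    exact hgb x hx
  set m : ℝ := sInf (g '' B) with hm
  have hseq : ∀ n : ℕ, ∃ x ∈ B, g x < m + 1 / ((n : ℝ) + 1) := by
    intro n
    have hlt : m < m + 1 / ((n : ℝ) + 1) := lt_add_of_pos_right _ (by positivity)
    obtain ⟨b, hbmem, hblt⟩ := (csInf_lt_iff hbdd hBne).mp hlt
    obtain ⟨x, hxB, rfl⟩ := hbmem
    exact ⟨x, hxB, hblt⟩
  choose u huB hug using hseq
  have hunorm : ∀ n, ‖u n‖ ≤ ρ := fun n => huB n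
  obtain ⟨z, φ, hφ, hweak⟩ := aux_weak_compact ρ u hunorm
  have hnmem : ∀ k, ‖u (φ k)‖ ∈ Set.Icc (0:ℝ) ρ := fun k => ⟨norm_nonneg _, hunorm _⟩
  obtain ⟨s, hsI, ψ, hψ, htend⟩ := (isCompact_Icc (a := (0:ℝ)) (b := ρ)).isSeqCompact hnmem
  set v : ℕ → X := fun k => u (φ (ψ k)) with hv
  have htendv : Tendsto (fun k => ‖v k‖) atTop (𝓝 s) := htend
  have hvweak : ∀ x : X, Tendsto (fun k => ⟪v k, x⟫_ℝ) atTop (𝓝 ⟪z, x⟫_ℝ) := by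
    intro x
    exact (hweak x).comp hψ.tendsto_atTop
  have hmle : ∀ n, m ≤ g (u n) := fun n => csInf_le hbdd ⟨u n, huB n, rfl⟩
  have hgu : Tendsto (fun n => g (u n)) atTop (𝓝 m) := by
    have hup : Tendsto (fun n : ℕ => m + 1 / ((n : ℝ) + 1)) atTop (𝓝 m) := by
      have := tendsto_one_div_add_atTop_nhds_zero_nat (𝕜 := ℝ)
      simpa using tendsto_const_nhds.add this
    exact tendsto_of_tendsto_of_tendsto_of_le_of_le tendsto_const_nhds hup
      hmle (fun n => (hug n).le)
  have hgv : Tendsto (fun k => g (v k)) atTop (𝓝 m) :=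
    hgu.comp (hφ.comp hψ).tendsto_atTop
  have hJv : Tendsto (fun k => J (v k)) atTop (𝓝 ((L : ℝ) / 2 * s ^ 2 - m)) := by
    have h1 : Tendsto (fun k => (L : ℝ) / 2 * ‖v k‖ ^ 2 - g (v k)) atTop
        (𝓝 ((L : ℝ) / 2 * s ^ 2 - m)) :=
      ((htendv.pow 2).const_mul ((L : ℝ) / 2)).sub hgv
    refine h1.congr fun k => ?_
    simp [hg]
  have hsz : ‖z‖ ≤ s := by
    have h1 : Tendsto (fun k => ⟪v k, z⟫_ℝ) atTop (𝓝 ⟪z, z⟫_ℝ) := hvweak z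
    have h3 : Tendsto (fun k => ‖v k‖ * ‖z‖) atTop (𝓝 (s * ‖z‖)) := htendv.mul_const _
    have h4 : ⟪z, z⟫_ℝ ≤ s * ‖z‖ :=
      le_of_tendsto_of_tendsto' h1 h3 (fun k => real_inner_le_norm _ _)
    rw [real_inner_self_eq_norm_sq] at h4
    rcases eq_or_lt_of_le (norm_nonneg z) with h | h
    · rw [← h]; exact hsI.1
    · nlinarith [h4]
  have hwk : Tendsto (fun k => toWeakSpace ℝ X (v k)) atTop (𝓝 (toWeakSpace ℝ X z)) := by
    have hinj : Function.Injective ((topDualPairing ℝ X).flip) := by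
      intro a b hab
      have h1 : ((topDualPairing ℝ X).flip a) (toDual ℝ X (a - b))
          = ((topDualPairing ℝ X).flip b) (toDual ℝ X (a - b)) := by rw [hab]
      simp only [LinearMap.flip_apply, topDualPairing_apply, toDual_apply_apply] at h1
      have h2 : ⟪a - b, a - b⟫_ℝ = 0 := by rw [inner_sub_right]; linarith
      rw [inner_self_eq_zero] at h2
      exact sub_eq_zero.mp h2
    refine (WeakBilin.tendsto_iff_forall_eval_tendsto (f := fun k => toWeakSpace ℝ X (v k))
      (x := toWeakSpace ℝ X z) _ hinj).mpr ?_
    intro f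
    have heq : ∀ x : X, ((topDualPairing ℝ X).flip) (toWeakSpace ℝ X x) f = f x := fun _ => rfl
    simp only [heq]
    set w : X := (toDual ℝ X).symm f with hw
    have hfx : ∀ x : X, f x = ⟪x, w⟫_ℝ := by
      intro x
      rw [real_inner_comm]
      exact (toDual_symm_apply).symm
    simp only [hfx]
    exact hvweak w
  have hlimsup := hsw v z hwk
  rw [hJv.limsup_eq] at hlimsup
  have hgz : g z ≤ m := by
    have h2 : ‖z‖ ^ 2 ≤ s ^ 2 := by nlinarith [hsz, norm_nonneg z]
    have h1 : (L : ℝ) / 2 * ‖z‖ ^ 2 ≤ (L : ℝ) / 2 * s ^ 2 :=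
      mul_le_mul_of_nonneg_left h2 (by positivity)
    simp only [hg]
    linarith [hlimsup]
  refine ⟨z, le_trans hsz hsI.2, fun x hx => ?_⟩
  exact le_trans hgz (csInf_le hbdd ⟨x, hx, rfl⟩)

end Aux3

theorem stmt17 {X : Type*} [NormedAddCommGroup X] [InnerProductSpace ℝ X] [CompleteSpace X]
    (J : X → ℝ) (J' : X → X)
    (hgrad : ∀ x : X, HasGradientAt J (J' x) x) (hcont : Continuous J')
    (hsw : ∀ (u : ℕ → X) (y : X),
      Tendsto (fun n => toWeakSpace ℝ X (u n)) atTop (nhds (toWeakSpace ℝ X y)) →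
        limsup (fun n => J (u n)) atTop ≤ J y)
    (L : ℝ≥0) (hL : 0 < (L : ℝ)) (hLip : LipschitzWith L J')
    (hJ' : ∀ u : X, J' u ≠ 0)
    (M : Set X)
    (hM : M = {z : X | ∀ x : X, (1 / 2 : ℝ) * ‖z‖ ^ 2 - (1 / L) * J z ≤
      (1 / 2 : ℝ) * ‖x‖ ^ 2 - (1 / L) * J x}) :
    (0 : EReal) < ⨅ z ∈ M, ((‖z‖ ^ 2 : ℝ) : EReal) ∧
    ∀ r : ℝ, 0 < r → ((r : EReal) < ⨅ z ∈ M, ((‖z‖ ^ 2 : ℝ) : EReal)) →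
      ∃! y : X, ‖y‖ ^ 2 = r ∧ ∀ x : X, ‖x‖ ^ 2 = r → J x ≤ J y := by
  classical
  have hℓ0 : (L : ℝ) ≠ 0 := ne_of_gt hL
  have hcoe : ((1 / L : ℝ≥0) : ℝ) = 1 / (L : ℝ) := by push_cast; rfl
  have heqg : ∀ w : X, (L : ℝ) * ((1 / 2 : ℝ) * ‖w‖ ^ 2 - (1 / (L : ℝ)) * J w)
      = (L : ℝ) / 2 * ‖w‖ ^ 2 - J w := by
    intro w; field_simp
  have heqg' : ∀ w : X, (1 / (L : ℝ)) * ((L : ℝ) / 2 * ‖w‖ ^ 2 - J w)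
      = (1 / 2 : ℝ) * ‖w‖ ^ 2 - (1 / (L : ℝ)) * J w := by
    intro w; field_simp
  have hMg : ∀ z : X, z ∈ M ↔
      ∀ x : X, (L : ℝ) / 2 * ‖z‖ ^ 2 - J z ≤ (L : ℝ) / 2 * ‖x‖ ^ 2 - J x := by
    intro z
    rw [hM]
    simp only [Set.mem_setOf_eq, hcoe]
    constructor
    · intro h x
      have h2 := mul_le_mul_of_nonneg_left (h x) hL.le
      rwa [heqg, heqg] at h2
    · intro h x
      have h2 := mul_le_mul_of_nonneg_left (h x) (one_div_nonneg.mpr hL.le)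
      rwa [heqg', heqg'] at h2
  -- a global minimum over a ball with interior norm yields a member of M
  have hcrit : ∀ w : X, (∀ᶠ x in 𝓝 w, (L : ℝ) / 2 * ‖w‖ ^ 2 - J w ≤
      (L : ℝ) / 2 * ‖x‖ ^ 2 - J x) → J' w = (L : ℝ) • w := by
    intro w hloc
    have hmin : IsLocalMin (fun x : X => (L : ℝ) / 2 * ‖x‖ ^ 2 - J x) w := hloc
    have h0 := hmin.hasFDerivAt_eq_zero (aux_grad J J' hgrad (L : ℝ) w)
    have h1 : (L : ℝ) • w - J' w = 0 := by
      have h2 : toDual ℝ X ((L : ℝ) • w - J' w) = toDual ℝ X 0 := by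
        rw [h0, map_zero]
      exact (toDual ℝ X).injective h2
    rw [sub_eq_zero] at h1
    exact h1.symm
  -- Part 1
  have part1 : (0 : EReal) < ⨅ z ∈ M, ((‖z‖ ^ 2 : ℝ) : EReal) := by
    by_contra hc
    rw [not_lt] at hc
    have hMne : M.Nonempty := by
      by_contra hne
      rw [Set.not_nonempty_iff_eq_empty] at hne
      rw [hne] at hc
      simp at hc
    have hseq : ∀ n : ℕ, ∃ z ∈ M, ‖z‖ ^ 2 < 1 / ((n : ℝ) + 1) := by
      intro n
      have h1 : (⨅ z ∈ M, ((‖z‖ ^ 2 : ℝ) : EReal)) < ((1 / ((n : ℝ) + 1) : ℝ) : EReal) := by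
        refine lt_of_le_of_lt hc ?_
        exact_mod_cast EReal.coe_lt_coe_iff.mpr (by positivity)
      rw [iInf_lt_iff] at h1
      obtain ⟨z, hz⟩ := h1
      rw [iInf_lt_iff] at hz
      obtain ⟨hzM, hz⟩ := hz
      exact ⟨z, hzM, by exact_mod_cast hz⟩
    choose zs hzsM hzs using hseq
    have hzsnorm : Tendsto (fun n => ‖zs n‖) atTop (𝓝 0) := by
      have hup : Tendsto (fun n : ℕ => Real.sqrt (1 / ((n : ℝ) + 1))) atTop (𝓝 0) := by
        have h1 : Tendsto (fun n : ℕ => 1 / ((n : ℝ) + 1)) atTop (𝓝 0) :=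
          tendsto_one_div_add_atTop_nhds_zero_nat
        have h2 : Tendsto (Real.sqrt ∘ fun n : ℕ => 1 / ((n : ℝ) + 1)) atTop
            (𝓝 (Real.sqrt 0)) := (Real.continuous_sqrt.tendsto 0).comp h1
        rw [Real.sqrt_zero] at h2
        exact h2
      refine squeeze_zero (fun n => norm_nonneg _) (fun n => ?_) hup
      have h3 : ‖zs n‖ = Real.sqrt (‖zs n‖ ^ 2) := by
        rw [Real.sqrt_sq (norm_nonneg _)]
      rw [h3]
      exact Real.sqrt_le_sqrt (hzs n).le
    have hzs0 : Tendsto zs atTop (𝓝 0) := by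
      rw [tendsto_zero_iff_norm_tendsto_zero]
      exact hzsnorm
    have hJcont : Continuous J := by
      have : Differentiable ℝ J := fun x => (hgrad x).hasFDerivAt.differentiableAt
      exact this.continuous
    have hgcont : Continuous (fun x : X => (L : ℝ) / 2 * ‖x‖ ^ 2 - J x) := by
      exact (continuous_const.mul ((continuous_norm).pow 2)).sub hJcont
    have hg0 : ∀ x : X, (L : ℝ) / 2 * ‖(0 : X)‖ ^ 2 - J 0 ≤ (L : ℝ) / 2 * ‖x‖ ^ 2 - J x := by
      intro x
      have h1 : Tendsto (fun n => (L : ℝ) / 2 * ‖zs n‖ ^ 2 - J (zs n)) atTop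
          (𝓝 ((L : ℝ) / 2 * ‖(0 : X)‖ ^ 2 - J 0)) := (hgcont.tendsto 0).comp hzs0
      refine le_of_tendsto h1 (Eventually.of_forall fun n => ?_)
      exact (hMg (zs n)).mp (hzsM n) x
    have hw := hcrit 0 (Eventually.of_forall hg0)
    rw [smul_zero] at hw
    exact hJ' 0 hw
  refine ⟨part1, ?_⟩
  -- Part 2
  intro r hr0 hrδ
  have hMgt : ∀ z ∈ M, r < ‖z‖ ^ 2 := by
    intro z hz
    have h1 : (r : EReal) < ((‖z‖ ^ 2 : ℝ) : EReal) :=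
      lt_of_lt_of_le hrδ (iInf₂_le z hz)
    exact_mod_cast h1
  set ρ : ℝ := Real.sqrt r with hρdef
  have hρpos : 0 < ρ := Real.sqrt_pos.mpr hr0
  have hρ2 : ρ ^ 2 = r := Real.sq_sqrt hr0.le
  obtain ⟨y, hyB, hymin⟩ := aux_ball_min J J' hgrad hsw L hLip ρ hρpos.le
  -- an interior minimizer over the ball is impossible
  have hint : ∀ w : X, ‖w‖ < ρ →
      (∀ x : X, ‖x‖ ≤ ρ → (L : ℝ) / 2 * ‖w‖ ^ 2 - J w ≤ (L : ℝ) / 2 * ‖x‖ ^ 2 - J x) →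
      False := by
    intro w hw hwmin
    have hloc : ∀ᶠ x in 𝓝 w, (L : ℝ) / 2 * ‖w‖ ^ 2 - J w ≤ (L : ℝ) / 2 * ‖x‖ ^ 2 - J x := by
      have hopen : IsOpen {x : X | ‖x‖ < ρ} := isOpen_lt continuous_norm continuous_const
      exact Filter.eventually_of_mem (hopen.mem_nhds hw) (fun x hx => hwmin x (le_of_lt hx))
    have hcw := hcrit w hloc
    have hwM : w ∈ M := (hMg w).mpr (aux_global J J' hgrad L hLip w hcw)
    have h1 := hMgt w hwM
    have h2 : ‖w‖ ^ 2 < r := by nlinarith [norm_nonneg w]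
    linarith
  have hysph : ‖y‖ ^ 2 = r := by
    rcases eq_or_lt_of_le hyB with h | h
    · rw [← hρ2, h]
    · exact absurd (hint y h hymin) not_false
  have hymax : ∀ x : X, ‖x‖ ^ 2 = r → J x ≤ J y := by
    intro x hx
    have hxρ : ‖x‖ ≤ ρ := by
      have : ‖x‖ = ρ := by nlinarith [norm_nonneg x, hρpos]
      exact this.le
    have h1 := hymin x hxρ
    rw [hysph, hx] at h1
    linarith
  refine ⟨y, ⟨hysph, hymax⟩, ?_⟩
  rintro y' ⟨hy'sph, hy'max⟩
  by_contra hne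
  have hJeq : J y' = J y := le_antisymm (hymax y' hy'sph) (hy'max y hysph)
  have hgy : (L : ℝ) / 2 * ‖y'‖ ^ 2 - J y' = (L : ℝ) / 2 * ‖y‖ ^ 2 - J y := by
    rw [hy'sph, hysph, hJeq]
  have hmid := aux_midpoint J J' hgrad L hLip y y'
  set mm : X := (1 / 2 : ℝ) • (y + y') with hmm
  have hmnorm : ‖mm‖ ^ 2 = r - ‖y - y'‖ ^ 2 / 4 := by
    have hpar := parallelogram_law_with_norm ℝ y y'
    have h1 : ‖mm‖ ^ 2 = ‖y + y'‖ ^ 2 / 4 := by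
      rw [hmm, norm_smul]
      simp
      ring
    nlinarith [hpar, hy'sph, hysph]
  have hd0 : 0 < ‖y - y'‖ := by
    rw [norm_pos_iff, sub_ne_zero]
    exact fun h => hne h.symm
  have hmlt : ‖mm‖ < ρ := by
    nlinarith [norm_nonneg mm, hρpos, hρ2, hmnorm]
  have hmmin : ∀ x : X, ‖x‖ ≤ ρ →
      (L : ℝ) / 2 * ‖mm‖ ^ 2 - J mm ≤ (L : ℝ) / 2 * ‖x‖ ^ 2 - J x := by
    intro x hx
    have h1 := hymin x hx
    rw [hgy] at hmid
    calc (L : ℝ) / 2 * ‖mm‖ ^ 2 - J mm ≤ (L : ℝ) / 2 * ‖y‖ ^ 2 - J y := by linarith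
      _ ≤ (L : ℝ) / 2 * ‖x‖ ^ 2 - J x := h1
  exact hint mm hmlt hmmin
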